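/- Let F be a finite field with q elements, T a positive integer, and let π1 be a fixed F-linear subspace of F^T of dimension d1. For integers d2 ≤ T and d12 with 0 ≤ d12 ≤ min(d1,d2), the number of d2-dimensional subspaces π2 of F^T with dim(π1 ∩ π2) = d12 equals q^{(d1−d12)(d2−d12)} · |Gr_F(d1, d12)| · |Gr_F(T−d1, d2−d12)|. In particular this number depends on π1 only through its dimension d1. -/

import Mathlib

open Finset Module

/- `grCard F N d` is the number of `d`-dimensional `F`-linear subspaces of `F^N`
(the Gaussian binomial coefficient). -/
noncomputable def grCard (F : Type) [Field F] [Fintype F] (N d : ℕ) : ℕ :=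
  Nat.card {W : Submodule F (Fin N → F) // Module.finrank F ↥W = d}

lemma auxA (F : Type) [Field F] [Fintype F] {E : Type} [AddCommGroup E] [Module F E]
    [FiniteDimensional F E] (Wb : Submodule F E) (n m : ℕ)
    (h : Module.finrank F ↥Wb = n) :
    Nat.card {U : Submodule F E // U ≤ Wb ∧ Module.finrank F ↥U = m} = grCard F n m := by
  have e : ↥Wb ≃ₗ[F] (Fin n → F) := LinearEquiv.ofFinrankEq _ _ (by
    rw [h, Module.finrank_pi, Fintype.card_fin])
  refine Nat.card_congr ?_
  have e1 : {U : Submodule F E // U ≤ Wb ∧ Module.finrank F ↥U = m} ≃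
      {U' : Submodule F ↥Wb // Module.finrank F ↥U' = m} := by
    refine ⟨fun U => ⟨Submodule.comap Wb.subtype U.1, ?_⟩,
      fun U' => ⟨Submodule.map Wb.subtype U'.1, Submodule.map_subtype_le _ _,
        (Submodule.finrank_map_subtype_eq _ _).trans U'.2⟩, ?_, ?_⟩
    · rw [← Submodule.finrank_map_subtype_eq, Submodule.map_comap_subtype,
        inf_of_le_right U.2.1]
      exact U.2.2
    · rintro ⟨U, hU, hr⟩
      exact Subtype.ext (by simp [Submodule.map_comap_subtype, inf_of_le_right hU])
    · rintro ⟨U', hr⟩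
      exact Subtype.ext (Submodule.comap_map_eq_of_injective Wb.injective_subtype U')
  have e2 : {U' : Submodule F ↥Wb // Module.finrank F ↥U' = m} ≃
      {U'' : Submodule F (Fin n → F) // Module.finrank F ↥U'' = m} := by
    refine ⟨fun U => ⟨Submodule.map (e : ↥Wb →ₗ[F] (Fin n → F)) U.1,
        (LinearEquiv.finrank_map_eq e U.1).trans U.2⟩,
      fun U => ⟨Submodule.map (e.symm : (Fin n → F) →ₗ[F] ↥Wb) U.1,
        (LinearEquiv.finrank_map_eq e.symm U.1).trans U.2⟩, ?_, ?_⟩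
    · rintro ⟨U, hr⟩
      refine Subtype.ext ?_
      dsimp only
      rw [← Submodule.map_comp]
      simp
    · rintro ⟨U, hr⟩
      refine Subtype.ext ?_
      dsimp only
      rw [← Submodule.map_comp]
      simp
  exact e1.trans e2

lemma auxSigma {α β : Type*} [Finite α] [Finite β] (g : α → β) (k : ℕ)
    (h : ∀ b, Nat.card {a // g a = b} = k) : Nat.card α = k * Nat.card β := by
  classical
  cases nonempty_fintype α
  cases nonempty_fintype β
  rw [Nat.card_eq_fintype_card, Nat.card_eq_fintype_card,
    Fintype.card_congr (Equiv.sigmaFiberEquiv g).symm, Fintype.card_sigma]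
  simp only [← Nat.card_eq_fintype_card, h, Finset.sum_const, smul_eq_mul, mul_comm,
    Finset.card_univ]

lemma auxHom (F : Type) [Field F] [Fintype F] {V W : Type*} [AddCommGroup V] [Module F V]
    [AddCommGroup W] [Module F W] [FiniteDimensional F V] [FiniteDimensional F W]
    (a b : ℕ) (ha : Module.finrank F V = a) (hb : Module.finrank F W = b) :
    Nat.card (V →ₗ[F] W) = Fintype.card F ^ (a * b) := by
  classical
  have : Finite (V →ₗ[F] W) := by
    have : Finite V := Module.finite_of_finite F
    have : Finite W := Module.finite_of_finite F
    exact Finite.of_injective (fun f => (f : V → W)) (fun f g h => LinearMap.ext (congrFun h))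
  cases nonempty_fintype (V →ₗ[F] W)
  rw [Nat.card_eq_fintype_card, card_eq_pow_finrank (K := F), Module.finrank_linearMap, ha, hb]

lemma auxFiber (F : Type) [Field F] [Fintype F] {E : Type} [AddCommGroup E] [Module F E]
    [FiniteDimensional F E] (π1 C : Submodule F E) (hC : IsCompl π1 C)
    (U V : Submodule F E) (hU : U ≤ π1) (hV : V ≤ C) :
    Nat.card {π2 : Submodule F E // π1 ⊓ π2 = U ∧
      Submodule.map (C.subtype ∘ₗ C.projectionOnto π1 hC.symm) π2 = V} =
    Fintype.card F ^
      (Module.finrank F ↥V * (Module.finrank F ↥π1 - Module.finrank F ↥U)) := by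
  classical
  set p : E →ₗ[F] E := C.subtype ∘ₗ C.projectionOnto π1 hC.symm with hp
  have hp1 : ∀ x ∈ π1, p x = 0 := by
    intro x hx
    simp [hp, Submodule.projectionOnto_apply_of_mem_right hC.symm hx]
  have hpC : ∀ x ∈ C, p x = x := by
    intro x hx
    simp [hp, Submodule.projectionOnto_apply_left hC.symm ⟨x, hx⟩]
  have hpmem : ∀ x, p x ∈ C := fun x => (C.projectionOnto π1 hC.symm x).2
  have hpker : ∀ x, p x = 0 → x ∈ π1 := by
    intro x hx
    have := Submodule.projectionOnto_apply_eq_zero_iff (p := C) (q := π1) hC.symm (x := x)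
    simp only [hp, LinearMap.comp_apply] at hx
    exact this.mp (by exact_mod_cast Subtype.ext_iff.mpr (by simpa using hx))
  have hsub : ∀ x, x - p x ∈ π1 := by
    intro x
    apply hpker
    rw [map_sub, hpC _ (hpmem x), sub_self]
  -- complement W of U inside π1
  obtain ⟨Wc, hWc⟩ := Submodule.exists_isCompl (U.comap π1.subtype)
  set W : Submodule F E := Submodule.map π1.subtype Wc with hWdef
  have hWle : W ≤ π1 := Submodule.map_subtype_le _ _
  have hUW_sup : U ⊔ W = π1 := by
    have h1 : Submodule.map π1.subtype (U.comap π1.subtype ⊔ Wc) = π1 := by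
      rw [hWc.codisjoint.eq_top, Submodule.map_top, Submodule.range_subtype]
    rw [Submodule.map_sup] at h1
    rwa [Submodule.map_comap_subtype, inf_of_le_right hU] at h1
  have hUW_inf : U ⊓ W = ⊥ := by
    have h1 : Submodule.map π1.subtype (U.comap π1.subtype ⊓ Wc) = ⊥ := by
      rw [hWc.disjoint.eq_bot, Submodule.map_bot]
    rw [Submodule.map_inf _ π1.injective_subtype] at h1
    rwa [Submodule.map_comap_subtype, inf_of_le_right hU] at h1
  have hWrank : Module.finrank F ↥W =
      Module.finrank F ↥π1 - Module.finrank F ↥U := by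
    have h1 := Submodule.finrank_sup_add_finrank_inf_eq U W
    rw [hUW_sup, hUW_inf] at h1
    simp only [finrank_bot, add_zero] at h1
    omega
  -- IsCompl W (U ⊔ C)
  have hWcompl : IsCompl W (U ⊔ C) := by
    constructor
    · rw [disjoint_iff]
      rw [eq_bot_iff]
      rintro x ⟨hxW, hxUC⟩
      obtain ⟨u, hu, c, hc, rfl⟩ := Submodule.mem_sup.mp hxUC
      have hcπ : c ∈ π1 := by
        have h1 : (u + c) - u ∈ π1 := sub_mem (hWle hxW) (hU hu)
        simpa using h1
      have hc0 : c = 0 :=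
        (Submodule.mem_bot F).mp (hC.disjoint.le_bot ⟨hcπ, hc⟩)
      subst hc0
      have : u + 0 ∈ U ⊓ W := ⟨by simpa using hu, hxW⟩
      rw [hUW_inf] at this
      simpa using this
    · rw [codisjoint_iff, ← sup_assoc, sup_comm W U, hUW_sup, hC.codisjoint.eq_top]
  set r : E →ₗ[F] ↥W := W.projectionOnto (U ⊔ C) hWcompl with hr
  have hrW : ∀ w : ↥W, r ↑w = w := fun w =>
    Submodule.projectionOnto_apply_left hWcompl w
  have hrU : ∀ x ∈ U, r x = 0 := fun x hx =>
    Submodule.projectionOnto_apply_of_mem_right hWcompl (Submodule.mem_sup_left hx)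
  have hrC : ∀ x ∈ C, r x = 0 := fun x hx =>
    Submodule.projectionOnto_apply_of_mem_right hWcompl (Submodule.mem_sup_right hx)
  have hUmem : ∀ x ∈ π1, r x = 0 → x ∈ U := by
    intro x hx hrx
    rw [← hUW_sup] at hx
    obtain ⟨a, ha, b, hb, rfl⟩ := Submodule.mem_sup.mp hx
    have : r (a + b) = ⟨b, hb⟩ := by
      rw [map_add, hrU a ha, hrW ⟨b, hb⟩, zero_add]
    rw [hrx] at this
    have hb0 : b = 0 := by
      have := congrArg (Subtype.val) this.symm
      simpa using this
    simpa [hb0] using ha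
  -- the parametrization
  set ℓ : (↥V →ₗ[F] ↥W) → (↥V →ₗ[F] E) := fun f => V.subtype + W.subtype ∘ₗ f with hℓ
  have hℓ_apply : ∀ f (v : ↥V), ℓ f v = ↑v + ↑(f v) := fun f v => rfl
  set Φ : (↥V →ₗ[F] ↥W) → Submodule F E := fun f => U ⊔ LinearMap.range (ℓ f) with hΦ
  have hΦ_mem1 : ∀ f, π1 ⊓ Φ f = U := by
    intro f
    apply le_antisymm
    · rintro x ⟨hx1, hx2⟩
      obtain ⟨a, ha, z, hz, rfl⟩ := Submodule.mem_sup.mp hx2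
      obtain ⟨v, rfl⟩ := hz
      have h0 : p (a + ℓ f v) = 0 := hp1 _ hx1
      rw [map_add, hp1 a (hU ha), zero_add, hℓ_apply, map_add,
        hpC _ (hV v.2), hp1 _ (hWle (f v).2), add_zero] at h0
      have hv0 : v = 0 := Subtype.ext h0
      simpa [hv0] using ha
    · exact le_inf hU le_sup_left
  have hΦ_mem2 : ∀ f, Submodule.map p (Φ f) = V := by
    intro f
    rw [hΦ]
    simp only []
    rw [Submodule.map_sup]
    have h1 : Submodule.map p U = ⊥ := by
      rw [eq_bot_iff]
      rintro x ⟨y, hy, rfl⟩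
      simp [hp1 y (hU hy)]
    have h2 : Submodule.map p (LinearMap.range (ℓ f)) = V := by
      rw [← LinearMap.range_comp]
      have : p ∘ₗ ℓ f = V.subtype := by
        ext v
        simp only [LinearMap.comp_apply, hℓ_apply, map_add, Submodule.coe_subtype]
        rw [hpC _ (hV v.2), hp1 _ (hWle (f v).2), add_zero]
      rw [this, Submodule.range_subtype]
    rw [h1, h2, bot_sup_eq]
  set Φ' : (↥V →ₗ[F] ↥W) → {π2 : Submodule F E // π1 ⊓ π2 = U ∧ Submodule.map p π2 = V} :=
    fun f => ⟨Φ f, hΦ_mem1 f, hΦ_mem2 f⟩ with hΦ'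
  have hinj : Function.Injective Φ' := by
    intro f g hfg
    have hfg' : Φ f = Φ g := congrArg Subtype.val hfg
    ext v
    have hmem : ℓ f v ∈ Φ g := by
      rw [← hfg']
      exact Submodule.mem_sup_right ⟨v, rfl⟩
    obtain ⟨a, ha, z, hz, hsum⟩ := Submodule.mem_sup.mp hmem
    obtain ⟨v', rfl⟩ := hz
    have hpv : (v : E) = ↑v' := by
      have := congrArg p hsum
      rw [hℓ_apply, hℓ_apply, map_add, map_add, map_add, hp1 a (hU ha),
        hpC _ (hV v.2), hp1 _ (hWle (f v).2), hpC _ (hV v'.2),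
        hp1 _ (hWle (g v').2), add_zero, zero_add, add_zero] at this
      exact this.symm
    have hv : v = v' := Subtype.ext hpv
    subst hv
    have h2 : (f v : E) - ↑(g v) = a := by
      have h3 := hsum
      rw [hℓ_apply, hℓ_apply] at h3
      rw [eq_sub_of_add_eq h3]
      abel
    have hdiff : ((f v : E) - ↑(g v)) ∈ U ⊓ W :=
      ⟨h2 ▸ ha, sub_mem (f v).2 (g v).2⟩
    rw [hUW_inf] at hdiff
    exact sub_eq_zero.mp ((Submodule.mem_bot F).mp hdiff)
  have hsurj : Function.Surjective Φ' := by
    rintro ⟨π2, hi, hm⟩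
    have hUle2 : U ≤ π2 := hi ▸ inf_le_right
    have hex : ∀ v : ↥V, ∃ x, x ∈ π2 ∧ p x = ↑v := by
      intro v
      have hv : (v : E) ∈ Submodule.map p π2 := hm ▸ v.2
      obtain ⟨x, hx, hpx⟩ := Submodule.mem_map.mp hv
      exact ⟨x, hx, hpx⟩
    choose xv hx1 hx2 using hex
    have hwd : ∀ (v : ↥V) (y : E), y ∈ π2 → p y = ↑v → r y = r (xv v) := by
      intro v y hy hpy
      have hsub2 : y - xv v ∈ π2 := sub_mem hy (hx1 v)
      have hker : p (y - xv v) = 0 := by rw [map_sub, hpy, hx2 v, sub_self]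
      have hU2 : y - xv v ∈ U := by rw [← hi]; exact ⟨hpker _ hker, hsub2⟩
      have h0 := hrU _ hU2
      rw [map_sub] at h0
      exact sub_eq_zero.mp h0
    set f : ↥V →ₗ[F] ↥W :=
      { toFun := fun v => r (xv v)
        map_add' := by
          intro v w
          have h1 : r (xv v + xv w) = r (xv (v + w)) :=
            hwd (v + w) (xv v + xv w) (add_mem (hx1 v) (hx1 w))
              (by rw [map_add, hx2, hx2]; rfl)
          show r (xv (v + w)) = r (xv v) + r (xv w)
          rw [← h1, map_add]
        map_smul' := by
          intro c v
          have h1 : r (c • xv v) = r (xv (c • v)) :=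
            hwd (c • v) (c • xv v) (Submodule.smul_mem _ _ (hx1 v))
              (by rw [map_smul, hx2]; rfl)
          show r (xv (c • v)) = c • r (xv v)
          rw [← h1, map_smul] } with hf
    have hfv_eq : ∀ v : ↥V, f v = r (xv v) := fun v => rfl
    have hkey : ∀ v : ↥V, ℓ f v ∈ π2 := by
      intro v
      have hu : xv v - ↑v - ↑(r (xv v)) ∈ U := by
        apply hUmem
        · have h1 : xv v - ↑v ∈ π1 := by
            have h2 := hsub (xv v); rwa [hx2 v] at h2
          exact sub_mem h1 (hWle (r (xv v)).2)
        · rw [map_sub, map_sub, hrC _ (hV v.2), hrW (r (xv v))]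
          abel
      have heq : ℓ f v = xv v - (xv v - ↑v - ↑(r (xv v))) := by
        rw [hℓ_apply, hfv_eq]
        abel
      rw [heq]
      exact sub_mem (hx1 v) (hUle2 hu)
    refine ⟨f, Subtype.ext ?_⟩
    apply le_antisymm
    · exact sup_le hUle2 (by rintro x ⟨v, rfl⟩; exact hkey v)
    · intro x hx
      have hvmem : p x ∈ V := hm ▸ Submodule.mem_map_of_mem hx
      have hfv : f ⟨p x, hvmem⟩ = r x := (hwd ⟨p x, hvmem⟩ x hx rfl).symm
      have hu : x - p x - ↑(r x) ∈ U := by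
        apply hUmem
        · exact sub_mem (hsub x) (hWle (r x).2)
        · rw [map_sub, map_sub, hrC _ (hpmem x), hrW (r x)]
          abel
      have heq : x = (x - p x - ↑(r x)) + ℓ f ⟨p x, hvmem⟩ := by
        rw [hℓ_apply, hfv]
        simp only [Submodule.coe_mk]
        abel
      rw [heq]
      exact Submodule.add_mem _ (Submodule.mem_sup_left hu)
        (Submodule.mem_sup_right ⟨⟨p x, hvmem⟩, rfl⟩)
  rw [← Nat.card_congr (Equiv.ofBijective Φ' ⟨hinj, hsurj⟩)]
  exact auxHom F _ _ rfl hWrank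

/-- For a fixed `d1`-dimensional subspace `π1` of `F^T`, the number of `d2`-dimensional
subspaces `π2` with `dim(π1 ∩ π2) = d12` equals
`q^{(d1−d12)(d2−d12)} · |Gr_F(d1, d12)| · |Gr_F(T−d1, d2−d12)|`. -/
theorem card_subspaces_with_intersection (F : Type) [Field F] [Fintype F] (T : ℕ) (hT : 0 < T)
    (d1 d2 d12 : ℕ) (h2T : d2 ≤ T) (h12 : d12 ≤ min d1 d2)
    (π1 : Submodule F (Fin T → F)) (hπ1 : Module.finrank F ↥π1 = d1) :
    Nat.card {π2 : Submodule F (Fin T → F) //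
        Module.finrank F ↥π2 = d2 ∧ Module.finrank F ↥(π1 ⊓ π2) = d12} =
      Fintype.card F ^ ((d1 - d12) * (d2 - d12)) * grCard F d1 d12 *
        grCard F (T - d1) (d2 - d12) := by
  classical
  have hd12_1 : d12 ≤ d1 := le_trans h12 (min_le_left _ _)
  have hd12_2 : d12 ≤ d2 := le_trans h12 (min_le_right _ _)
  have hET : Module.finrank F (Fin T → F) = T := by
    rw [Module.finrank_pi, Fintype.card_fin]
  obtain ⟨C, hC⟩ := Submodule.exists_isCompl π1
  have hCrank : Module.finrank F ↥C = T - d1 := by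
    have h1 := Submodule.finrank_add_eq_of_isCompl hC
    rw [hπ1, hET] at h1
    omega
  have hfin : Finite (Submodule F (Fin T → F)) :=
    Finite.of_injective (fun W => (W : Set (Fin T → F))) SetLike.coe_injective
  set p : (Fin T → F) →ₗ[F] (Fin T → F) := C.subtype ∘ₗ C.projectionOnto π1 hC.symm
    with hp
  have hpmem : ∀ x, p x ∈ C := fun x => (C.projectionOnto π1 hC.symm x).2
  have hkerp : LinearMap.ker p = π1 := by
    rw [hp, LinearMap.ker_comp, Submodule.ker_subtype, Submodule.comap_bot,
      Submodule.ker_projectionOnto]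
  have hrank : ∀ π2 : Submodule F (Fin T → F),
      Module.finrank F ↥(Submodule.map p π2) + Module.finrank F ↥(π1 ⊓ π2) =
        Module.finrank F ↥π2 := by
    intro π2
    have h1 := LinearMap.finrank_range_add_finrank_ker (p.comp π2.subtype)
    rw [LinearMap.range_comp, Submodule.range_subtype, LinearMap.ker_comp, hkerp] at h1
    have h2 : Module.finrank F ↥(Submodule.comap π2.subtype π1) =
        Module.finrank F ↥(π1 ⊓ π2) := by
      rw [← Submodule.finrank_map_subtype_eq π2, Submodule.map_comap_subtype, inf_comm]
    omega
  have hmapC : ∀ π2 : Submodule F (Fin T → F), Submodule.map p π2 ≤ C := by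
    rintro π2 x ⟨y, hy, rfl⟩
    exact hpmem y
  set g : {π2 : Submodule F (Fin T → F) //
      Module.finrank F ↥π2 = d2 ∧ Module.finrank F ↥(π1 ⊓ π2) = d12} →
      ({U : Submodule F (Fin T → F) // U ≤ π1 ∧ Module.finrank F ↥U = d12} ×
       {V : Submodule F (Fin T → F) // V ≤ C ∧ Module.finrank F ↥V = d2 - d12}) :=
    fun x => (⟨π1 ⊓ x.1, inf_le_left, x.2.2⟩,
      ⟨Submodule.map p x.1, hmapC x.1, by have := hrank x.1; omega⟩) with hg
  have hfiber : ∀ b, Nat.card {a // g a = b} =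
      Fintype.card F ^ ((d1 - d12) * (d2 - d12)) := by
    intro b
    have e : {a // g a = b} ≃ {π2 : Submodule F (Fin T → F) //
        π1 ⊓ π2 = b.1.1 ∧ Submodule.map p π2 = b.2.1} := by
      refine ⟨fun x => ⟨x.1.1, ?_, ?_⟩, fun y => ⟨⟨y.1, ?_, ?_⟩, ?_⟩, ?_, ?_⟩
      · exact congrArg Subtype.val (congrArg Prod.fst x.2)
      · exact congrArg Subtype.val (congrArg Prod.snd x.2)
      · have h1 := hrank y.1
        rw [y.2.1, y.2.2, b.1.2.2, b.2.2.2] at h1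
        omega
      · rw [y.2.1]; exact b.1.2.2
      · exact Prod.ext (Subtype.ext y.2.1) (Subtype.ext y.2.2)
      · rintro ⟨a, ha⟩; rfl
      · rintro ⟨y, hy⟩; rfl
    rw [Nat.card_congr e, auxFiber F π1 C hC b.1.1 b.2.1 b.1.2.1 b.2.2.1,
      b.2.2.2, hπ1, b.1.2.2, Nat.mul_comm]
  rw [auxSigma g _ hfiber, Nat.card_prod,
    auxA F π1 d1 d12 hπ1, auxA F C (T - d1) (d2 - d12) hCrank, mul_assoc]
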